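/- Let B ∈ C^{n×n} with B_H ≥ 0 and B_A anti-Hermitian. Then B = B_A + B_H has all eigenvalues with strictly positive real part if and only if ε B_A + B_H has all eigenvalues with strictly positive real part for every real ε ≠ 0. -/

import Mathlib

open Matrix
open scoped ComplexOrder

lemma mem_spectrum_iff_exists_eigvec {n : ℕ} (M : Matrix (Fin n) (Fin n) ℂ) (μ : ℂ) :
    μ ∈ spectrum ℂ M ↔ ∃ v ≠ 0, M *ᵥ v = μ • v := by
  rw [spectrum.mem_iff, Matrix.isUnit_iff_isUnit_det, isUnit_iff_ne_zero, not_ne_iff,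
    ← Matrix.exists_mulVec_eq_zero_iff]
  constructor
  · rintro ⟨v, hv, h⟩
    refine ⟨v, hv, ?_⟩
    have : (algebraMap ℂ (Matrix (Fin n) (Fin n) ℂ)) μ *ᵥ v - M *ᵥ v = 0 := by
      rw [← Matrix.sub_mulVec, h]
    have h2 := sub_eq_zero.mp this
    rw [← h2, Algebra.algebraMap_eq_smul_one, Matrix.smul_mulVec, Matrix.one_mulVec]
  · rintro ⟨v, hv, h⟩
    refine ⟨v, hv, ?_⟩
    rw [Matrix.sub_mulVec, Algebra.algebraMap_eq_smul_one, Matrix.smul_mulVec,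
      Matrix.one_mulVec, h, sub_self]

lemma key_eps {n : ℕ} (B : Matrix (Fin n) (Fin n) ℂ)
    (hBH : ((1/2 : ℂ) • (B + Bᴴ)).PosSemidef)
    (hB : ∀ μ ∈ spectrum ℂ B, 0 < μ.re) (ε : ℝ) (hε : ε ≠ 0) :
    ∀ μ ∈ spectrum ℂ
      ((ε : ℂ) • ((1/2 : ℂ) • (B - Bᴴ)) + (1/2 : ℂ) • (B + Bᴴ)), 0 < μ.re := by
  set A : Matrix (Fin n) (Fin n) ℂ := (1/2 : ℂ) • (B - Bᴴ) with hA
  set H : Matrix (Fin n) (Fin n) ℂ := (1/2 : ℂ) • (B + Bᴴ) with hH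
  have hAH : A + H = B := by rw [hA, hH]; module
  intro μ hμ
  by_contra hre
  push_neg at hre
  obtain ⟨v, hv, heig⟩ := (mem_spectrum_iff_exists_eigvec _ μ).mp hμ
  -- the "anti-Hermitian part" has purely imaginary quadratic form
  set a : ℂ := star v ⬝ᵥ A *ᵥ v with ha
  have hAconj : Aᴴ = -A := by
    rw [hA, Matrix.conjTranspose_smul, Matrix.conjTranspose_sub, Matrix.conjTranspose_conjTranspose]
    simp [Complex.star_def]
    module
  have hstar_a0 : star a = star v ⬝ᵥ Aᴴ *ᵥ v := by
    rw [ha, ← Matrix.star_dotProduct_star, star_star, Matrix.star_mulVec,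
      ← Matrix.dotProduct_mulVec]
  have hstar_a : star a = -a := by
    rw [hstar_a0, hAconj, Matrix.neg_mulVec, dotProduct_neg, ← ha]
  have ha_re : a.re = 0 := by
    have := congrArg Complex.re hstar_a
    simp only [Complex.star_def, Complex.conj_re, Complex.neg_re] at this
    linarith
  set c : ℂ := star v ⬝ᵥ H *ᵥ v with hc
  have hc_nonneg : 0 ≤ c := hBH.dotProduct_mulVec_nonneg v
  have hc_im : c.im = 0 := (Complex.nonneg_iff.mp hc_nonneg).2.symm
  have hc_re : 0 ≤ c.re := (Complex.nonneg_iff.mp hc_nonneg).1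
  set s : ℂ := star v ⬝ᵥ v with hs
  have hs_nonneg : 0 ≤ s := dotProduct_star_self_nonneg v
  have hs_im : s.im = 0 := (Complex.nonneg_iff.mp hs_nonneg).2.symm
  have hs_ne : s ≠ 0 := fun h => hv (dotProduct_star_self_eq_zero.mp h)
  have hs_re : 0 < s.re := by
    rcases lt_or_eq_of_le (Complex.nonneg_iff.mp hs_nonneg).1 with h | h
    · exact h
    · exfalso; apply hs_ne; apply Complex.ext <;> simp [← h, hs_im]
  -- quadratic form identity
  have hquad : (ε : ℂ) * a + c = μ * s := by
    have : star v ⬝ᵥ (((ε : ℂ) • A + H) *ᵥ v) = star v ⬝ᵥ (μ • v) := by rw [heig]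
    rwa [Matrix.add_mulVec, Matrix.smul_mulVec, dotProduct_add,
      dotProduct_smul, dotProduct_smul, smul_eq_mul, smul_eq_mul,
      ← ha, ← hc, ← hs] at this
  have hquad_re : c.re = μ.re * s.re := by
    have := congrArg Complex.re hquad
    simp only [Complex.add_re, Complex.mul_re, Complex.ofReal_re, Complex.ofReal_im,
      ha_re, hs_im] at this
    simpa using this
  have hμre : μ.re = 0 := by
    rcases lt_or_eq_of_le hre with h | h
    · nlinarith
    · exact h
  have hc0 : c = 0 := by
    apply Complex.ext _ hc_im
    simp only [Complex.zero_re, Complex.zero_im]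
    rw [hquad_re, hμre, zero_mul]
  -- hence H v = 0
  have hHv : H *ᵥ v = 0 := (hBH.dotProduct_mulVec_zero_iff v).mp (by rw [← hc, hc0])
  -- and A v = (μ/ε) v
  have hAv : A *ᵥ v = (μ / (ε : ℂ)) • v := by
    have h1 : (ε : ℂ) • (A *ᵥ v) = μ • v := by
      have := heig
      rw [Matrix.add_mulVec, Matrix.smul_mulVec, hHv, add_zero] at this
      exact this
    have hεc : (ε : ℂ) ≠ 0 := by exact_mod_cast hε
    calc A *ᵥ v = (ε : ℂ)⁻¹ • ((ε : ℂ) • (A *ᵥ v)) := by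
          rw [smul_smul, inv_mul_cancel₀ hεc, one_smul]
      _ = (ε : ℂ)⁻¹ • (μ • v) := by rw [h1]
      _ = (μ / (ε : ℂ)) • v := by rw [smul_smul, div_eq_inv_mul]
  -- so μ/ε is an eigenvalue of B with zero real part
  have hBv : B *ᵥ v = (μ / (ε : ℂ)) • v := by
    rw [← hAH, Matrix.add_mulVec, hHv, add_zero, hAv]
  have hmem : μ / (ε : ℂ) ∈ spectrum ℂ B :=
    (mem_spectrum_iff_exists_eigvec B _).mpr ⟨v, hv, hBv⟩
  have := hB _ hmem
  rw [Complex.div_ofReal_re, hμre, zero_div] at this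
  exact lt_irrefl 0 this

/-- `B = B_A + B_H` is hypocoercive (spectrum in the open right half plane) iff
`ε B_A + B_H` is hypocoercive for every real `ε ≠ 0`. -/
theorem hypocoercive_iff_eps_hypocoercive {n : ℕ} (B : Matrix (Fin n) (Fin n) ℂ)
    (hBH : ((1/2 : ℂ) • (B + Bᴴ)).PosSemidef) :
    (∀ μ ∈ spectrum ℂ B, 0 < μ.re) ↔
      ∀ ε : ℝ, ε ≠ 0 →
        ∀ μ ∈ spectrum ℂ
          ((ε : ℂ) • ((1/2 : ℂ) • (B - Bᴴ)) + (1/2 : ℂ) • (B + Bᴴ)), 0 < μ.re := by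
  constructor
  · exact fun hB ε hε => key_eps B hBH hB ε hε
  · intro h μ hμ
    have h1 := h 1 one_ne_zero
    have hB : ((1 : ℝ) : ℂ) • ((1/2 : ℂ) • (B - Bᴴ)) + (1/2 : ℂ) • (B + Bᴴ) = B := by
      push_cast
      module
    rw [hB] at h1
    exact h1 μ hμ
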